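/- Let I ⊆ R be a cointerval squarefree monomial ideal generated in degree d, and order its minimal generators lexicographically decreasing: G(I) = (m_1 >_lex m_2 >_lex ⋯ >_lex m_k). Then I has linear quotients with respect to this ordering: for every j, the colon ideal ⟨m_1,…,m_{j−1}⟩ : m_j is generated by a subset of the variables. -/

import Mathlib

open MvPolynomial

/-- The monomial ideal generated by a set of exponent vectors. -/
noncomputable def genIdeal (K : Type*) [Field K] {n : ℕ} (ms : Set (Fin n →₀ ℕ)) :
    Ideal (MvPolynomial (Fin n) K) :=
  Ideal.span ((fun u => MvPolynomial.monomial u (1 : K)) '' ms)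

/-- The colon ideal `⟨m_1, …, m_{j-1}⟩ : m_j`. -/
noncomputable def colonJ (K : Type*) [Field K] {n k : ℕ} (m : Fin k → (Fin n →₀ ℕ))
    (j : Fin k) : Ideal (MvPolynomial (Fin n) K) :=
  Submodule.colon (genIdeal K {u | ∃ i : Fin k, i < j ∧ u = m i})
    (Ideal.span {MvPolynomial.monomial (m j) (1 : K)})

/-- `I` has linear quotients w.r.t. the ordering `m_1,…,m_k` of its generators:
each colon ideal is generated by a subset of the variables. -/
def HasLinearQuotients (K : Type*) [Field K] {n k : ℕ}
    (m : Fin k → (Fin n →₀ ℕ)) : Prop :=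
  ∀ j : Fin k, ∃ S : Set (Fin n),
    colonJ K m j = Ideal.span ((fun s => (MvPolynomial.X s : MvPolynomial (Fin n) K)) '' S)

/-- `set(m_j) = {i : x_i ∈ ⟨m_1,…,m_{j-1}⟩ : m_j}`. -/
def mset (K : Type*) [Field K] {n k : ℕ} (m : Fin k → (Fin n →₀ ℕ)) (j : Fin k) :
    Set (Fin n) :=
  {t | (MvPolynomial.X t : MvPolynomial (Fin n) K) ∈ colonJ K m j}

/-- The `m i` are minimal monomial generators: none divides another. -/
def MinimalGens {n k : ℕ} (m : Fin k → (Fin n →₀ ℕ)) : Prop :=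
  ∀ i j : Fin k, m i ≤ m j → i = j

/-- `b` is the decomposition function: for a monomial `u ∈ I`, `b u` is the smallest
index `j` with `u ∈ ⟨m_1,…,m_j⟩`. -/
def IsDecompositionFunction (K : Type*) [Field K] {n k : ℕ}
    (m : Fin k → (Fin n →₀ ℕ)) (b : (Fin n →₀ ℕ) → Fin k) : Prop :=
  ∀ u : Fin n →₀ ℕ, MvPolynomial.monomial u (1 : K) ∈ genIdeal K (Set.range m) →
    (MvPolynomial.monomial u (1 : K) ∈ genIdeal K {v | ∃ i : Fin k, i ≤ b u ∧ v = m i}) ∧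
    (∀ j : Fin k,
      MvPolynomial.monomial u (1 : K) ∈ genIdeal K {v | ∃ i : Fin k, i ≤ j ∧ v = m i} →
      b u ≤ j)

/-- The decomposition function is regular: `set(b(x_t·m)) ⊆ set(m)` for every
generator `m` and every `t ∈ set(m)`. -/
def IsRegularDecomp (K : Type*) [Field K] {n k : ℕ}
    (m : Fin k → (Fin n →₀ ℕ)) (b : (Fin n →₀ ℕ) → Fin k) : Prop :=
  ∀ j : Fin k, ∀ t ∈ mset K m j,
    mset K m (b (m j + Finsupp.single t 1)) ⊆ mset K m j

/-- The exponent vector of the squarefree monomial `x_{f 0} ⋯ x_{f (d-1)}`. -/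
noncomputable def vecOfFin {n d : ℕ} (f : Fin d → Fin n) : Fin n →₀ ℕ :=
  ∑ l : Fin d, Finsupp.single (f l) 1

/-- The exchange property defining cointerval ideals: for every squarefree monomial
`x_{i_1}⋯x_{i_d} ∈ I` (`i_1 < … < i_d`), every `t ≤ d` and all `j_1 < … < j_t` with
`j_s ≤ i_s` and `{j_1,…,j_t} ∩ {i_{t+1},…,i_d} = ∅`, the monomial
`x_{j_1}⋯x_{j_t}·x_{i_{t+1}}⋯x_{i_d}` also lies in `I`. -/
def CointervalIdeal (K : Type*) [Field K] {n : ℕ} (d : ℕ)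
    (I : Ideal (MvPolynomial (Fin n) K)) : Prop :=
  ∀ f : Fin d → Fin n, StrictMono f →
    MvPolynomial.monomial (vecOfFin f) (1 : K) ∈ I →
    ∀ (t : ℕ) (ht : t ≤ d), ∀ g : Fin t → Fin n, StrictMono g →
      (∀ s : Fin t, g s ≤ f (Fin.castLE ht s)) →
      (∀ (s : Fin t) (l : Fin d), t ≤ (l : ℕ) → g s ≠ f l) →
      MvPolynomial.monomial
          ((∑ s : Fin t, Finsupp.single (g s) 1) +
            ∑ l ∈ Finset.univ.filter (fun l : Fin d => t ≤ (l : ℕ)),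
              Finsupp.single (f l) 1) (1 : K) ∈ I

/-- `u >_lex v` for exponent vectors: at the smallest index where they differ, `u` is
larger. -/
def lexGt {n : ℕ} (u v : Fin n →₀ ℕ) : Prop :=
  ∃ i : Fin n, (∀ j : Fin n, j < i → u j = v j) ∧ v i < u i

/-- The generators are listed in lexicographically decreasing order. -/
def LexDec {n k : ℕ} (m : Fin k → (Fin n →₀ ℕ)) : Prop :=
  ∀ a b : Fin k, a < b → lexGt (m a) (m b)

/-- `u` is the exponent vector of a squarefree monomial of degree `d`. -/
def SqFreeDeg {n : ℕ} (d : ℕ) (u : Fin n →₀ ℕ) : Prop :=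
  (∀ a : Fin n, u a ≤ 1) ∧ u.support.card = d

/-! ### Auxiliary lemmas -/

lemma mem_genIdeal_iff {K : Type*} [Field K] {n : ℕ} {ms : Set (Fin n →₀ ℕ)}
    {u : Fin n →₀ ℕ} :
    MvPolynomial.monomial u (1 : K) ∈ genIdeal K ms ↔ ∃ v ∈ ms, v ≤ u := by
  rw [genIdeal, mem_ideal_span_monomial_image]
  simp [MvPolynomial.support_monomial]

lemma mem_colonJ_iff {K : Type*} [Field K] {n k : ℕ} (m : Fin k → (Fin n →₀ ℕ))
    (j : Fin k) (f : MvPolynomial (Fin n) K) :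
    f ∈ colonJ K m j ↔
      f * MvPolynomial.monomial (m j) (1 : K) ∈
        genIdeal K {u | ∃ i : Fin k, i < j ∧ u = m i} := by
  rw [colonJ, Submodule.mem_colon]
  constructor
  · intro h
    simpa [smul_eq_mul] using h _ (Ideal.subset_span rfl)
  · intro h p hp
    rw [SetLike.mem_coe, Ideal.mem_span_singleton'] at hp
    obtain ⟨a, rfl⟩ := hp
    have : f • (a * MvPolynomial.monomial (m j) (1 : K)) =
        a * (f * MvPolynomial.monomial (m j) (1 : K)) := by
      rw [smul_eq_mul]; ring
    rw [this]
    exact Ideal.mul_mem_left _ _ h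

lemma lexGt_asymm {n : ℕ} {u v : Fin n →₀ ℕ} (h1 : lexGt u v) (h2 : lexGt v u) : False := by
  obtain ⟨a, ha1, ha2⟩ := h1
  obtain ⟨b, hb1, hb2⟩ := h2
  rcases lt_trichotomy a b with h | h | h
  · exact absurd (hb1 a h) (by omega)
  · subst h; omega
  · exact absurd (ha1 b h) (by omega)

/-- The degree (sum of exponents) of an exponent vector. -/
private def fdeg {n : ℕ} (u : Fin n →₀ ℕ) : ℕ := u.sum fun _ x => x

private lemma fdeg_add {n : ℕ} (u v : Fin n →₀ ℕ) : fdeg (u + v) = fdeg u + fdeg v := by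
  simp [fdeg, Finsupp.sum_add_index']

private lemma fdeg_single {n : ℕ} (t : Fin n) (c : ℕ) : fdeg (Finsupp.single t c) = c := by
  simp [fdeg, Finsupp.sum_single_index]

private lemma fdeg_of_sqfree {n d : ℕ} {u : Fin n →₀ ℕ} (h : SqFreeDeg d u) :
    fdeg u = d := by
  rw [fdeg, Finsupp.sum]
  have : ∀ a ∈ u.support, u a = 1 := fun a ha =>
    le_antisymm (h.1 a) (Nat.one_le_iff_ne_zero.2 (Finsupp.mem_support_iff.1 ha))
  rw [Finset.sum_congr rfl this, Finset.sum_const, smul_eq_mul, mul_one, h.2]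

private lemma card_support_le_fdeg {n : ℕ} (u : Fin n →₀ ℕ) :
    u.support.card ≤ fdeg u := by
  rw [fdeg, Finsupp.sum]
  calc u.support.card = ∑ _a ∈ u.support, 1 := by simp
    _ ≤ ∑ a ∈ u.support, u a :=
      Finset.sum_le_sum fun a ha => Nat.one_le_iff_ne_zero.2 (Finsupp.mem_support_iff.1 ha)

/-- The key combinatorial step: if `t` is not in the support of `m j` but some element of
the support exceeds `t`, then by the cointerval exchange property there is an earlier
generator dividing `x_t · m_j`. -/
lemma key_step (K : Type*) [Field K] {n k d : ℕ} (m : Fin k → (Fin n →₀ ℕ))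
    (hsf : ∀ j : Fin k, SqFreeDeg d (m j)) (hlex : LexDec m)
    (hco : CointervalIdeal K d (genIdeal K (Set.range m)))
    (j : Fin k) (t : Fin n) (h0 : m j t = 0) (hex : ∃ a ∈ (m j).support, t < a) :
    ∃ i' : Fin k, i' < j ∧ m i' ≤ m j + Finsupp.single t 1 := by
  classical
  set s := (m j).support with hs_def
  have hs : s.card = d := (hsf j).2
  set f := s.orderEmbOfFin hs with hf_def
  have hfs : ∀ l, f l ∈ s := fun l => s.orderEmbOfFin_mem hs l
  have hts : t ∉ s := by simp [hs_def, h0]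
  -- m j as a sum of singles
  have hmj : m j = ∑ a ∈ s, Finsupp.single a 1 := by
    conv_lhs => rw [← Finsupp.sum_single (m j)]
    rw [Finsupp.sum]
    refine Finset.sum_congr rfl fun a ha => ?_
    have h1 : m j a = 1 := le_antisymm ((hsf j).1 a)
      (Nat.one_le_iff_ne_zero.2 (Finsupp.mem_support_iff.1 ha))
    rw [h1]
  have hvec : vecOfFin (⇑f) = m j := by
    rw [hmj, vecOfFin]
    refine Finset.sum_bij (fun l _ => f l) (fun l _ => hfs l)
      (fun l1 _ l2 _ h => f.injective h) (fun a ha => ?_) (fun l _ => rfl)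
    have : a ∈ Set.range ⇑f := by rw [hf_def, Finset.range_orderEmbOfFin]; exact ha
    obtain ⟨l, hl⟩ := this
    exact ⟨l, Finset.mem_univ l, hl⟩
  -- the smallest element of s above t
  set B := s.filter (fun a => t < a) with hB_def
  have hBne : B.Nonempty := by
    obtain ⟨a, ha, hta⟩ := hex
    exact ⟨a, Finset.mem_filter.2 ⟨ha, hta⟩⟩
  set a0 := B.min' hBne with ha0_def
  have ha0B : a0 ∈ B := B.min'_mem hBne
  have ha0s : a0 ∈ s := (Finset.mem_filter.1 ha0B).1
  have hta0 : t < a0 := (Finset.mem_filter.1 ha0B).2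
  have hmin : ∀ a ∈ s, t < a → a0 ≤ a := fun a ha h =>
    B.min'_le a (Finset.mem_filter.2 ⟨ha, h⟩)
  set q : Fin d := (s.orderIsoOfFin hs).symm ⟨a0, ha0s⟩ with hq_def
  have hq : f q = a0 := by
    have := s.coe_orderIsoOfFin_apply hs q
    rw [hq_def] at this ⊢
    rw [← this, OrderIso.apply_symm_apply]
  have F1 : ∀ l : Fin d, l < q → f l < t := by
    intro l hl
    have h1 : f l < a0 := hq ▸ f.strictMono hl
    rcases lt_trichotomy (f l) t with h | h | h
    · exact h
    · exact absurd (h ▸ hfs l) hts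
    · exact absurd (hmin (f l) (hfs l) h) (not_le.2 h1)
  have F2 : ∀ l : Fin d, q ≤ l → t < f l := fun l hl =>
    lt_of_lt_of_le hta0 (hq ▸ f.monotone hl)
  set p := (q : ℕ) with hp_def
  have hqd : p + 1 ≤ d := q.2
  set g : Fin (p + 1) → Fin n :=
    fun s' => if h : (s' : ℕ) < p then f ⟨s', h.trans q.2⟩ else t with hg_def
  have hgp : ∀ s' : Fin (p + 1), ¬ ((s' : ℕ) < p) → (s' : ℕ) = p := by
    intro s' h; have := s'.2; omega
  have gmono : StrictMono g := by
    intro s1 s2 h12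
    have h12' : (s1 : ℕ) < (s2 : ℕ) := h12
    by_cases h1 : (s1 : ℕ) < p
    · by_cases h2 : (s2 : ℕ) < p
      · simp only [hg_def, dif_pos h1, dif_pos h2]
        exact f.strictMono (by exact h12')
      · have hs2 : (s2 : ℕ) = p := hgp s2 h2
        simp only [hg_def, dif_pos h1, dif_neg h2]
        exact F1 ⟨s1, h1.trans q.2⟩ (by simp [Fin.lt_def, hp_def] at h1 ⊢; omega)
    · have hs1 : (s1 : ℕ) = p := hgp s1 h1
      have := s2.2; omega
  have hle' : ∀ s' : Fin (p + 1), g s' ≤ f (Fin.castLE hqd s') := by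
    intro s'
    by_cases h : (s' : ℕ) < p
    · simp only [hg_def, dif_pos h]
      exact le_of_eq (congrArg f (Fin.ext rfl))
    · have hs' : (s' : ℕ) = p := hgp s' h
      simp only [hg_def, dif_neg h]
      have : Fin.castLE hqd s' = q := Fin.ext (by simpa using hs')
      rw [this, hq]
      exact le_of_lt hta0
  have hne : ∀ (s' : Fin (p + 1)) (l : Fin d), p + 1 ≤ (l : ℕ) → g s' ≠ f l := by
    intro s' l hl
    have hql : q < l := by rw [Fin.lt_def]; omega
    by_cases h : (s' : ℕ) < p
    · simp only [hg_def, dif_pos h]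
      exact ne_of_lt (f.strictMono (show (⟨s', h.trans q.2⟩ : Fin d) < l by
        rw [Fin.lt_def]; simp; omega))
    · simp only [hg_def, dif_neg h]
      exact ne_of_lt (F2 l (le_of_lt hql))
  have hmemI : MvPolynomial.monomial (vecOfFin ⇑f) (1 : K) ∈ genIdeal K (Set.range m) := by
    rw [hvec, mem_genIdeal_iff]
    exact ⟨m j, ⟨j, rfl⟩, le_refl _⟩
  have hw := hco (⇑f) f.strictMono hmemI (p + 1) hqd g gmono hle' hne
  set w : Fin n →₀ ℕ :=
    (∑ s' : Fin (p + 1), Finsupp.single (g s') 1) +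
      ∑ l ∈ Finset.univ.filter (fun l : Fin d => p + 1 ≤ (l : ℕ)),
        Finsupp.single (f l) 1 with hw_def
  -- the key identity
  have Weq : w + Finsupp.single (f q) 1 = m j + Finsupp.single t 1 := by
    have split1 : ∑ s' : Fin (p + 1), Finsupp.single (g s') 1 =
        (∑ s' : Fin p, Finsupp.single (f ⟨(s' : ℕ), (s'.2.trans q.2)⟩) (1:ℕ)) +
          Finsupp.single t 1 := by
      rw [Fin.sum_univ_castSucc]
      congr 1
      · refine Finset.sum_congr rfl fun s' _ => ?_
        have h : ((Fin.castSucc s' : Fin (p+1)) : ℕ) < p := s'.2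
        simp only [hg_def, dif_pos h]
        rfl
      · have h : ¬ ((Fin.last p : ℕ) < p) := by simp
        simp only [hg_def, dif_neg h]
    have split2 : (∑ s' : Fin p, Finsupp.single (f ⟨(s' : ℕ), (s'.2.trans q.2)⟩) (1:ℕ)) =
        ∑ l ∈ Finset.univ.filter (fun l : Fin d => (l : ℕ) < p), Finsupp.single (f l) 1 := by
      refine Finset.sum_bij (fun s' _ => (⟨(s' : ℕ), s'.2.trans q.2⟩ : Fin d))
        (fun s' _ => Finset.mem_filter.2 ⟨Finset.mem_univ _, s'.2⟩)
        (fun s1 _ s2 _ h => by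
          apply Fin.ext
          simpa [Fin.ext_iff] using h) (fun l hl => ?_) (fun _ _ => rfl)
      have : (l : ℕ) < p := (Finset.mem_filter.1 hl).2
      exact ⟨⟨(l : ℕ), this⟩, Finset.mem_univ _, Fin.ext rfl⟩
    have split3 : (∑ l : Fin d, Finsupp.single (f l) (1:ℕ)) =
        (∑ l ∈ Finset.univ.filter (fun l : Fin d => (l : ℕ) < p), Finsupp.single (f l) 1) +
          Finsupp.single (f q) 1 +
          ∑ l ∈ Finset.univ.filter (fun l : Fin d => p + 1 ≤ (l : ℕ)),
            Finsupp.single (f l) 1 := by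
      have hdisj : (Finset.univ : Finset (Fin d)) =
          (Finset.univ.filter (fun l : Fin d => (l : ℕ) < p) ∪ {q}) ∪
            Finset.univ.filter (fun l : Fin d => p + 1 ≤ (l : ℕ)) := by
        ext l
        simp only [Finset.mem_univ, Finset.mem_union, Finset.mem_filter, Finset.mem_singleton,
          true_and, true_iff]
        rcases lt_trichotomy ((l : ℕ)) p with h | h | h
        · exact Or.inl (Or.inl h)
        · exact Or.inl (Or.inr (Fin.ext (by omega)))
        · exact Or.inr (by omega)
      have hd2 : Disjoint (Finset.univ.filter (fun l : Fin d => (l : ℕ) < p))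
          ({q} : Finset (Fin d)) := by
        rw [Finset.disjoint_right]
        intro l hl
        rw [Finset.mem_singleton] at hl
        subst hl
        simp only [Finset.mem_filter, Finset.mem_univ, true_and, not_lt, hp_def, le_refl]
      have hd1 : Disjoint ((Finset.univ.filter (fun l : Fin d => (l : ℕ) < p)) ∪ {q})
          (Finset.univ.filter (fun l : Fin d => p + 1 ≤ (l : ℕ))) := by
        rw [Finset.disjoint_right]
        intro l hl
        have h1 : p + 1 ≤ (l : ℕ) := (Finset.mem_filter.1 hl).2
        simp only [Finset.mem_union, Finset.mem_filter, Finset.mem_univ, true_and,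
          Finset.mem_singleton]
        push_neg
        refine ⟨by omega, fun h => ?_⟩
        subst h
        omega
      conv_lhs => rw [hdisj]
      rw [Finset.sum_union hd1, Finset.sum_union hd2, Finset.sum_singleton]
    have hmj2 : m j = ∑ l : Fin d, Finsupp.single (f l) (1:ℕ) := by
      rw [← hvec, vecOfFin]
    rw [hw_def, split1, split2, hmj2, split3]
    abel
  obtain ⟨v, ⟨i', rfl⟩, hvw⟩ := mem_genIdeal_iff.1 hw
  have Wle : w ≤ m j + Finsupp.single t 1 := by
    rw [← Weq]
    rw [Finsupp.le_def]
    intro a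
    simp
  have WleP : ∀ a, w a ≤ m j a + Finsupp.single t 1 a := fun a => Finsupp.le_def.1 Wle a
  have w1 : ∀ a, w a ≤ 1 := by
    intro a
    have hW := WleP a
    by_cases h : a = t
    · subst h; rw [h0] at hW; simpa using hW
    · have h1 : Finsupp.single t (1:ℕ) a = 0 := Finsupp.single_eq_of_ne' (Ne.symm h)
      have hm := (hsf j).1 a
      rw [h1] at hW
      omega
  have hfqt : f q ≠ t := ne_of_gt (hq ▸ hta0)
  have wt : w t = 1 := by
    have := congrArg (fun u => u t) Weq
    simp only [Finsupp.add_apply] at this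
    rw [Finsupp.single_eq_of_ne' hfqt, Finsupp.single_eq_same, h0] at this
    omega
  have wlt : ∀ a, a < t → w a = m j a := by
    intro a ha
    have := congrArg (fun u => u a) Weq
    simp only [Finsupp.add_apply] at this
    have h1 : Finsupp.single (f q) (1:ℕ) a = 0 :=
      Finsupp.single_eq_of_ne' (ne_of_gt (lt_trans ha (hq ▸ hta0)))
    have h2 : Finsupp.single t (1:ℕ) a = 0 := Finsupp.single_eq_of_ne' (ne_of_gt ha)
    rw [h1, h2] at this
    omega
  have hdegw : fdeg w = d := by
    have := congrArg fdeg Weq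
    simp only [fdeg_add, fdeg_single, fdeg_of_sqfree (hsf j)] at this
    omega
  have hcardw : w.support.card ≤ d := hdegw ▸ card_support_le_fdeg w
  have hsub : (m i').support ⊆ w.support := by
    intro a ha
    rw [Finsupp.mem_support_iff] at ha ⊢
    have := hvw a
    omega
  have hsupp_eq : (m i').support = w.support :=
    Finset.eq_of_subset_of_card_le hsub (by rw [(hsf i').2]; exact hcardw)
  have heq : m i' = w := by
    ext a
    by_cases h : a ∈ w.support
    · have h1 : a ∈ (m i').support := hsupp_eq ▸ h
      rw [Finsupp.mem_support_iff] at h h1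
      have := hvw a
      have := w1 a
      omega
    · have h1 : a ∉ (m i').support := hsupp_eq ▸ h
      rw [Finsupp.notMem_support_iff] at h h1
      rw [h, h1]
  have lexw : lexGt (m i') (m j) := by
    refine ⟨t, fun a ha => ?_, ?_⟩
    · rw [heq]; exact wlt a ha
    · rw [heq, wt, h0]; exact zero_lt_one
  have hij : i' < j := by
    rcases lt_trichotomy i' j with h | h | h
    · exact h
    · subst h
      obtain ⟨a, _, ha2⟩ := lexw
      omega
    · exact absurd (hlex j i' h) (fun h2 => lexGt_asymm lexw h2)
  exact ⟨i', hij, heq ▸ Wle⟩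

/-- a cointerval squarefree monomial ideal generated in degree `d`, with
minimal generators ordered lexicographically decreasing, has linear quotients with
respect to this ordering. -/
theorem stmt13 (K : Type*) [Field K] {n k d : ℕ} (m : Fin k → (Fin n →₀ ℕ))
    (hsf : ∀ j : Fin k, SqFreeDeg d (m j))
    (hlex : LexDec m)
    (hco : CointervalIdeal K d (genIdeal K (Set.range m))) :
    HasLinearQuotients K m := by
  classical
  intro j
  refine ⟨mset K m j, ?_⟩
  apply le_antisymm
  · -- the hard inclusion
    intro f hf
    rw [mem_ideal_span_X_image]
    intro u hu
    have hf' := (mem_colonJ_iff m j f).1 hf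
    rw [genIdeal, mem_ideal_span_monomial_image] at hf'
    have hsup : u + m j ∈ (f * MvPolynomial.monomial (m j) (1 : K)).support := by
      rw [MvPolynomial.mem_support_iff, MvPolynomial.coeff_mul_monomial, mul_one]
      exact MvPolynomial.mem_support_iff.1 hu
    obtain ⟨v, ⟨i, hij, rfl⟩, hle⟩ := hf' _ hsup
    obtain ⟨t, ht1, ht2⟩ := hlex i j hij
    have hmi1 : m i t = 1 := le_antisymm ((hsf i).1 t) (by omega)
    have hmj0 : m j t = 0 := by have := (hsf i).1 t; omega
    have hut : m i t ≤ u t + m j t := by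
      have := hle t
      simpa using this
    refine ⟨t, ?_, by omega⟩
    -- t ∈ mset K m j
    show (MvPolynomial.X t : MvPolynomial (Fin n) K) ∈ colonJ K m j
    rw [mem_colonJ_iff]
    have hX : (MvPolynomial.X t : MvPolynomial (Fin n) K) *
        MvPolynomial.monomial (m j) 1 =
        MvPolynomial.monomial (m j + Finsupp.single t 1) (1 : K) := by
      rw [show (MvPolynomial.X t : MvPolynomial (Fin n) K) =
        MvPolynomial.monomial (Finsupp.single t 1) 1 from rfl, MvPolynomial.monomial_mul,
        one_mul, add_comm]
    rw [hX, mem_genIdeal_iff]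
    have hex : ∃ a ∈ (m j).support, t < a := by
      by_contra hcon
      push_neg at hcon
      have hsub : (m j).support ⊆ (m i).support := by
        intro a ha
        have hat : a < t := by
          rcases lt_trichotomy a t with h | h | h
          · exact h
          · exact absurd (Finsupp.mem_support_iff.1 (h ▸ ha)) (by simp [hmj0])
          · exact absurd h (not_lt.2 (hcon a ha))
        rw [Finsupp.mem_support_iff] at ha ⊢
        rw [ht1 a hat]
        exact ha
      have hseq : (m j).support = (m i).support :=
        Finset.eq_of_subset_of_card_le hsub (by rw [(hsf i).2, (hsf j).2])
      have hti : t ∈ (m i).support := Finsupp.mem_support_iff.2 (by omega)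
      have htj : t ∈ (m j).support := hseq ▸ hti
      exact absurd (Finsupp.mem_support_iff.1 htj) (by simp [hmj0])
    obtain ⟨i', hi'j, hle'⟩ := key_step K m hsf hlex hco j t hmj0 hex
    exact ⟨m i', ⟨i', hi'j, rfl⟩, hle'⟩
  · -- the easy inclusion
    rw [Ideal.span_le]
    rintro x ⟨t, ht, rfl⟩
    exact ht
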